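/- Fix integers k₁, k₂ ≥ 2 and set δ(ℓ²) = |𝒞_{ℓ²}|/|𝒜_{ℓ²}|. Then δ(ℓ²) is asymptotic to 1/ℓ² as ℓ ranges over primes: for every ε > 0 there exists L such that for every prime ℓ > L, |ℓ²·δ(ℓ²) − 1| < ε. -/

import Mathlib

open Finset

attribute [local instance 10] Classical.propDecidable

section aux
variable {ℓ : ℕ} [hF : Fact ℓ.Prime]

variable {ℓ : ℕ} [hF : Fact ℓ.Prime]

theorem zz_card : Fintype.card (ZMod (ℓ^2)) = ℓ^2 := ZMod.card _

theorem zz_card_units : Fintype.card (ZMod (ℓ^2))ˣ = ℓ^2 - ℓ := by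
  rw [ZMod.card_units_eq_totient, Nat.totient_prime_pow hF.out (by norm_num)]
  norm_num [pow_two, Nat.mul_sub, Nat.mul_sub_one]

theorem zz_not_unit_iff {x : ZMod (ℓ^2)} : ¬ IsUnit x ↔ ℓ ∣ x.val := by
  have hx : (x.val : ZMod (ℓ^2)) = x := ZMod.natCast_rightInverse x
  have h := ZMod.isUnit_iff_coprime x.val (ℓ^2)
  rw [hx] at h
  have h2 : x.val.Coprime (ℓ^2) ↔ ¬ ℓ ∣ x.val := by
    rw [Nat.coprime_pow_right_iff two_pos]
    exact Nat.coprime_comm.trans (hF.out.coprime_iff_not_dvd)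
  rw [h, h2, not_not]

theorem zz_lmul_eq_zero_iff {x : ZMod (ℓ^2)} : (ℓ : ZMod (ℓ^2)) * x = 0 ↔ ℓ ∣ x.val := by
  have hx : (x.val : ZMod (ℓ^2)) = x := ZMod.natCast_rightInverse x
  have key : (ℓ:ZMod (ℓ^2)) * x = ((ℓ * x.val : ℕ) : ZMod (ℓ^2)) := by push_cast [hx]; ring
  rw [key, ZMod.natCast_eq_zero_iff]
  have hl := hF.out.pos
  constructor
  · rintro ⟨k, hk⟩
    refine ⟨k, Nat.eq_of_mul_eq_mul_left hl ?_⟩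
    rw [hk, pow_two]; ring
  · rintro ⟨k, hk⟩
    exact ⟨k, by rw [hk, pow_two]; ring⟩

theorem zz_card_le_of_pairwise {S : Finset (ZMod (ℓ^2))}
    (h : ∀ x ∈ S, ∀ y ∈ S, ℓ ∣ (x - y).val) : S.card ≤ ℓ := by
  rcases S.eq_empty_or_nonempty with rfl | ⟨x₀, hx₀⟩
  · simp [hF.out.pos.le]
  calc S.card ≤ (Finset.range ℓ).card := by
        apply Finset.card_le_card_of_injOn (fun x => (x - x₀).val / ℓ)
        · intro x hx
          simp only [Finset.mem_range]
          have h1 : (x - x₀).val < ℓ^2 := ZMod.val_lt _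
          have := hF.out.pos
          have h2 : ℓ ^ 2 = ℓ * ℓ := sq ℓ
          exact Finset.mem_coe.mpr <| Finset.mem_range.mpr <| Nat.div_lt_of_lt_mul (show (x - x₀).val < ℓ * ℓ by omega)
        · intro x hx y hy hxy
          have hdx := h x hx x₀ hx₀
          have hdy := h y hy x₀ hx₀
          simp only at hxy
          have hval : (x - x₀).val = (y - x₀).val := by
            rcases hdx with ⟨a, ha⟩; rcases hdy with ⟨b, hb⟩
            rw [ha, hb] at hxy ⊢
            have := hF.out.pos
            rw [Nat.mul_div_cancel_left _ this, Nat.mul_div_cancel_left _ this] at hxy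
            rw [hxy]
          have : ((x - x₀ : ZMod (ℓ^2))) = (y - x₀) := ZMod.val_injective _ hval
          linear_combination this
    _ = ℓ := Finset.card_range ℓ

theorem zz_card_filter_units :
    (Finset.univ.filter (fun x : ZMod (ℓ^2) => IsUnit x)).card = ℓ^2 - ℓ := by
  rw [← zz_card_units (ℓ := ℓ), ← Fintype.card_subtype]
  refine Fintype.card_congr (Equiv.ofBijective (fun u => ⟨(u : ZMod (ℓ^2)), u.isUnit⟩) ?_).symm
  constructor
  · intro u v huv
    exact Units.ext (congrArg Subtype.val huv)
  · rintro ⟨x, hx⟩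
    exact ⟨hx.unit, by simp⟩

theorem zz_card_nonunits :
    (Finset.univ.filter (fun x : ZMod (ℓ^2) => ¬ IsUnit x)).card = ℓ := by
  have h1 : (Finset.univ.filter (fun x : ZMod (ℓ^2) => IsUnit x)).card
      + (Finset.univ.filter (fun x : ZMod (ℓ^2) => ¬ IsUnit x)).card = ℓ^2 := by
    rw [Finset.card_filter_add_card_filter_not, Finset.card_univ, zz_card]
  have h2 := zz_card_filter_units (ℓ := ℓ)
  have := hF.out.two_le
  have h3 : ℓ ≤ ℓ^2 := by nlinarith
  omega

theorem zz_nonunit_struct {b : ZMod (ℓ^2)} (hb0 : b ≠ 0) (hb : ¬ IsUnit b) :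
    ∃ u : (ZMod (ℓ^2))ˣ, b = (ℓ : ZMod (ℓ^2)) * (u : ZMod (ℓ^2)) := by
  obtain ⟨k, hk⟩ := zz_not_unit_iff.mp hb
  have hbl : b.val < ℓ^2 := ZMod.val_lt _
  have hl := hF.out.pos
  have hk_lt : k < ℓ := by
    by_contra hkk
    push_neg at hkk
    have : ℓ * ℓ ≤ ℓ * k := Nat.mul_le_mul_left _ hkk
    rw [← pow_two] at this; omega
  have hk0 : k ≠ 0 := by
    intro h; subst h; apply hb0
    have : b.val = 0 := by omega
    have hx : (b.val : ZMod (ℓ^2)) = b := ZMod.natCast_rightInverse b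
    rw [← hx, this, Nat.cast_zero]
  have hkval : ((k : ZMod (ℓ^2))).val = k := ZMod.val_cast_of_lt (by nlinarith)
  have hku : IsUnit (k : ZMod (ℓ^2)) := by
    by_contra hcon
    have := zz_not_unit_iff.mp hcon
    rw [hkval] at this
    exact hk0 (Nat.eq_zero_of_dvd_of_lt this hk_lt ▸ rfl)
  refine ⟨hku.unit, ?_⟩
  have hx : (b.val : ZMod (ℓ^2)) = b := ZMod.natCast_rightInverse b
  rw [IsUnit.unit_spec, ← hx, hk]
  push_cast
  ring

theorem zz_line_card_le {b m : ZMod (ℓ^2)} (hb0 : b ≠ 0) (hb : ¬ IsUnit b) :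
    (Finset.univ.filter (fun c : ZMod (ℓ^2) => b * c = m)).card ≤ ℓ := by
  obtain ⟨u, hu⟩ := zz_nonunit_struct hb0 hb
  apply zz_card_le_of_pairwise
  intro x hx y hy
  simp only [Finset.mem_filter] at hx hy
  have h0 : b * (x - y) = 0 := by rw [mul_sub, hx.2, hy.2, sub_self]
  rw [hu] at h0
  have huu : ((u⁻¹ : (ZMod (ℓ^2))ˣ) : ZMod (ℓ^2)) * (u : ZMod (ℓ^2)) = 1 := u.inv_mul
  have : (ℓ : ZMod (ℓ^2)) * (x - y) = 0 := by
    linear_combination ((u⁻¹ : (ZMod (ℓ^2))ˣ) : ZMod (ℓ^2)) * h0 - (ℓ : ZMod (ℓ^2)) * (x - y) * huu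
  exact zz_lmul_eq_zero_iff.mp this

noncomputable def fcnt (ℓ : ℕ) [Fact ℓ.Prime] (m : ZMod (ℓ^2)) : ℕ :=
  (Finset.univ.filter (fun y : ZMod (ℓ^2) × ZMod (ℓ^2) => y.1 * y.2 = m)).card

theorem fcnt_unit {m : ZMod (ℓ^2)} (hm : IsUnit m) : fcnt ℓ m = ℓ^2 - ℓ := by
  rw [fcnt]
  have hset : (Finset.univ.filter (fun y : ZMod (ℓ^2) × ZMod (ℓ^2) => y.1 * y.2 = m))
      = Finset.univ.image (fun u : (ZMod (ℓ^2))ˣ =>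
          ((u : ZMod (ℓ^2)), ((u⁻¹ : (ZMod (ℓ^2))ˣ) : ZMod (ℓ^2)) * m)) := by
    ext y
    simp only [Finset.mem_filter, Finset.mem_univ, true_and, Finset.mem_image]
    constructor
    · intro hy
      have h1 : IsUnit y.1 := isUnit_of_mul_isUnit_left (hy.symm ▸ hm)
      refine ⟨h1.unit, ?_⟩
      have hs : (h1.unit : ZMod (ℓ^2)) = y.1 := h1.unit_spec
      have h2 : ((h1.unit⁻¹ : (ZMod (ℓ^2))ˣ) : ZMod (ℓ^2)) * m = y.2 := by
        rw [Units.inv_mul_eq_iff_eq_mul, hs, hy]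
      rw [Prod.ext_iff]
      exact ⟨hs, h2⟩
    · rintro ⟨u, rfl⟩
      exact Units.mul_inv_cancel_left u m
  rw [hset, Finset.card_image_of_injective _ (fun u v huv => Units.ext (congrArg Prod.fst huv)),
    Finset.card_univ, zz_card_units]

theorem fcnt_fiber (m : ZMod (ℓ^2)) : fcnt ℓ m = ∑ b : ZMod (ℓ^2),
    (Finset.univ.filter (fun c : ZMod (ℓ^2) => b * c = m)).card := by
  rw [fcnt, Finset.card_eq_sum_card_fiberwise (f := fun y => y.1) (t := Finset.univ)
    (fun x _ => Finset.mem_univ _)]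
  apply Finset.sum_congr rfl
  intro b _
  have h1 : (Finset.univ.filter (fun y : ZMod (ℓ^2) × ZMod (ℓ^2) => y.1 * y.2 = m)).filter
        (fun y => y.1 = b)
      = Finset.univ.filter (fun y : ZMod (ℓ^2) × ZMod (ℓ^2) => y.1 = b ∧ b * y.2 = m) := by
    rw [Finset.filter_filter]
    apply Finset.filter_congr
    intro y _
    constructor
    · rintro ⟨h1, rfl⟩; exact ⟨rfl, h1⟩
    · rintro ⟨rfl, h2⟩; exact ⟨h2, rfl⟩
  rw [h1, ← Finset.univ_product_univ, Finset.filter_product (p := fun a => a = b) (q := fun c => b * c = m), Finset.card_product,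
    Finset.filter_eq', if_pos (Finset.mem_univ b), Finset.card_singleton, one_mul]

theorem fcnt_le (m : ZMod (ℓ^2)) : fcnt ℓ m ≤ 3 * ℓ^2 := by
  rw [fcnt_fiber]
  rw [← Finset.add_sum_erase _ _ (Finset.mem_univ (0 : ZMod (ℓ^2)))]
  have h0 : (Finset.univ.filter (fun c : ZMod (ℓ^2) => (0 : ZMod (ℓ^2)) * c = m)).card ≤ ℓ^2 := by
    calc _ ≤ (Finset.univ : Finset (ZMod (ℓ^2))).card := Finset.card_filter_le _ _
    _ = ℓ^2 := by rw [Finset.card_univ, zz_card]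
  have h1 : ∑ b ∈ Finset.univ.erase (0 : ZMod (ℓ^2)),
      (Finset.univ.filter (fun c : ZMod (ℓ^2) => b * c = m)).card
      ≤ ∑ b ∈ Finset.univ.erase (0 : ZMod (ℓ^2)), (if IsUnit b then 1 else ℓ) := by
    apply Finset.sum_le_sum
    intro b hb
    have hb0 : b ≠ 0 := Finset.ne_of_mem_erase hb
    by_cases hu : IsUnit b
    · rw [if_pos hu]
      apply Finset.card_le_one.mpr
      intro c hc c' hc'
      simp only [Finset.mem_filter, Finset.mem_univ, true_and] at hc hc'
      have : b * c = b * c' := by rw [hc, hc']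
      exact hu.mul_right_cancel (by rwa [mul_comm b c, mul_comm b c'] at this)
    · rw [if_neg hu]
      exact zz_line_card_le hb0 hu
  have h2 : ∑ b ∈ Finset.univ.erase (0 : ZMod (ℓ^2)), (if IsUnit b then 1 else ℓ)
      ≤ ∑ b : ZMod (ℓ^2), (if IsUnit b then 1 else ℓ) :=
    Finset.sum_le_sum_of_subset (Finset.erase_subset _ _)
  have h3 : ∑ b : ZMod (ℓ^2), (if IsUnit b then 1 else ℓ) = (ℓ^2 - ℓ) * 1 + ℓ * ℓ := by
    rw [Finset.sum_ite, Finset.sum_const, Finset.sum_const, zz_card_filter_units,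
      zz_card_nonunits, smul_eq_mul, smul_eq_mul]
  have hll : ℓ ≤ ℓ^2 := by nlinarith [hF.out.pos]
  have he : ℓ * ℓ = ℓ^2 := (pow_two ℓ).symm
  omega
/-- reduction mod ℓ -/
noncomputable def redl (ℓ : ℕ) : ZMod (ℓ^2) →+* ZMod ℓ :=
  ZMod.castHom (dvd_pow_self ℓ (by norm_num)) (ZMod ℓ)

theorem redl_eq_zero_iff {x : ZMod (ℓ^2)} : redl ℓ x = 0 ↔ ℓ ∣ x.val := by
  rw [redl, ZMod.castHom_apply]
  rw [← ZMod.natCast_val, ZMod.natCast_eq_zero_iff]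

theorem zz_bad_card_le (t d : ZMod (ℓ^2)) :
    ((Finset.univ : Finset (ZMod (ℓ^2))).filter
      (fun a => ¬ IsUnit (a * (t - a) - d))).card ≤ 2 * ℓ := by
  classical
  set S := (Finset.univ : Finset (ZMod (ℓ^2))).filter
      (fun a => ¬ IsUnit (a * (t - a) - d)) with hS
  haveI : Fact ℓ.Prime := hF
  -- the polynomial X^2 - tX + d over ZMod ℓ
  set p : Polynomial (ZMod ℓ) :=
    Polynomial.C 1 * Polynomial.X^2 + Polynomial.C (-(redl ℓ t)) * Polynomial.X
      + Polynomial.C (redl ℓ d) with hp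
  have hpdeg : p.natDegree = 2 := Polynomial.natDegree_quadratic (by norm_num)
  have hpne : p ≠ 0 := by
    intro h
    rw [h] at hpdeg
    simp at hpdeg
  have himg : S.image (redl ℓ) ⊆ p.roots.toFinset := by
    intro z hz
    simp only [Finset.mem_image] at hz
    obtain ⟨a, ha, rfl⟩ := hz
    rw [hS, Finset.mem_filter] at ha
    have h1 : redl ℓ (a * (t - a) - d) = 0 :=
      redl_eq_zero_iff.mpr (zz_not_unit_iff.mp ha.2)
    rw [Multiset.mem_toFinset, Polynomial.mem_roots hpne]
    rw [Polynomial.IsRoot, hp]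
    simp only [Polynomial.eval_add, Polynomial.eval_mul, Polynomial.eval_C,
      Polynomial.eval_pow, Polynomial.eval_X, one_mul]
    have h2 : redl ℓ (a * (t - a) - d)
        = -(redl ℓ a ^ 2 + -(redl ℓ t) * redl ℓ a + redl ℓ d) := by
      push_cast [map_sub, map_mul]
      ring
    rw [h2] at h1
    exact neg_eq_zero.mp h1
  have hroots : (S.image (redl ℓ)).card ≤ 2 := by
    calc (S.image (redl ℓ)).card ≤ p.roots.toFinset.card := Finset.card_le_card himg
      _ ≤ Multiset.card p.roots := Multiset.toFinset_card_le _
      _ ≤ p.natDegree := Polynomial.card_roots' p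
      _ = 2 := hpdeg
  calc S.card ≤ ℓ * (S.image (redl ℓ)).card := by
        apply Finset.card_le_mul_card_image
        intro z hz
        apply zz_card_le_of_pairwise
        intro x hx y hy
        simp only [Finset.mem_filter] at hx hy
        have : redl ℓ (x - y) = 0 := by
          rw [map_sub, hx.2, hy.2, sub_self]
        exact redl_eq_zero_iff.mp this
    _ ≤ ℓ * 2 := Nat.mul_le_mul_left _ hroots
    _ = 2 * ℓ := Nat.mul_comm _ _

/-- number of matrices (as triples (a,b,c) with d-entry forced) with trace t, det d -/
noncomputable def ncnt (ℓ : ℕ) [Fact ℓ.Prime] (t d : ZMod (ℓ^2)) : ℕ :=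
  (Finset.univ.filter (fun x : ZMod (ℓ^2) × ZMod (ℓ^2) × ZMod (ℓ^2) =>
    x.1 * (t - x.1) - x.2.1 * x.2.2 = d)).card

theorem ncnt_eq_sum (t d : ZMod (ℓ^2)) :
    ncnt ℓ t d = ∑ a : ZMod (ℓ^2), fcnt ℓ (a * (t - a) - d) := by
  rw [ncnt, Finset.card_eq_sum_card_fiberwise (f := fun x => x.1) (t := Finset.univ)
    (fun x _ => Finset.mem_univ _)]
  apply Finset.sum_congr rfl
  intro a _
  have h1 : (Finset.univ.filter (fun x : ZMod (ℓ^2) × ZMod (ℓ^2) × ZMod (ℓ^2) =>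
        x.1 * (t - x.1) - x.2.1 * x.2.2 = d)).filter (fun x => x.1 = a)
      = Finset.univ.filter (fun x : ZMod (ℓ^2) × ZMod (ℓ^2) × ZMod (ℓ^2) =>
        x.1 = a ∧ x.2.1 * x.2.2 = a * (t - a) - d) := by
    rw [Finset.filter_filter]
    apply Finset.filter_congr
    intro x _
    constructor
    · rintro ⟨h1, rfl⟩
      refine ⟨rfl, ?_⟩
      rw [← h1]; ring
    · rintro ⟨rfl, h2⟩
      refine ⟨?_, rfl⟩
      rw [h2]; ring
  rw [h1, ← Finset.univ_product_univ,
    Finset.filter_product (p := fun y => y = a)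
      (q := fun y : ZMod (ℓ^2) × ZMod (ℓ^2) => y.1 * y.2 = a * (t - a) - d),
    Finset.card_product, Finset.filter_eq', if_pos (Finset.mem_univ a),
    Finset.card_singleton, one_mul, fcnt]

theorem ncnt_le (t d : ZMod (ℓ^2)) :
    ncnt ℓ t d ≤ ℓ^2 * (ℓ^2 - ℓ) + 2 * ℓ * (3 * ℓ^2) := by
  rw [ncnt_eq_sum]
  rw [← Finset.sum_filter_add_sum_filter_not Finset.univ
    (fun a : ZMod (ℓ^2) => IsUnit (a * (t - a) - d))]
  have h1 : ∑ a ∈ Finset.univ.filter (fun a : ZMod (ℓ^2) => IsUnit (a * (t - a) - d)),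
      fcnt ℓ (a * (t - a) - d) ≤ ℓ^2 * (ℓ^2 - ℓ) := by
    calc _ ≤ ∑ _a ∈ Finset.univ.filter (fun a : ZMod (ℓ^2) => IsUnit (a * (t - a) - d)),
          (ℓ^2 - ℓ) := by
          apply Finset.sum_le_sum
          intro a ha
          rw [fcnt_unit (Finset.mem_filter.mp ha).2]
      _ = (Finset.univ.filter (fun a : ZMod (ℓ^2) => IsUnit (a * (t - a) - d))).card
          * (ℓ^2 - ℓ) := by rw [Finset.sum_const, smul_eq_mul]
      _ ≤ ℓ^2 * (ℓ^2 - ℓ) := by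
          apply Nat.mul_le_mul_right
          calc _ ≤ (Finset.univ : Finset (ZMod (ℓ^2))).card := Finset.card_filter_le _ _
            _ = ℓ^2 := by rw [Finset.card_univ, zz_card]
  have h2 : ∑ a ∈ Finset.univ.filter (fun a : ZMod (ℓ^2) => ¬ IsUnit (a * (t - a) - d)),
      fcnt ℓ (a * (t - a) - d) ≤ 2 * ℓ * (3 * ℓ^2) := by
    calc _ ≤ ∑ _a ∈ Finset.univ.filter (fun a : ZMod (ℓ^2) => ¬ IsUnit (a * (t - a) - d)),
          3 * ℓ^2 := Finset.sum_le_sum (fun a _ => fcnt_le _)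
      _ = (Finset.univ.filter (fun a : ZMod (ℓ^2) => ¬ IsUnit (a * (t - a) - d))).card
          * (3 * ℓ^2) := by rw [Finset.sum_const, smul_eq_mul]
      _ ≤ 2 * ℓ * (3 * ℓ^2) := Nat.mul_le_mul_right _ (zz_bad_card_le t d)
  omega

theorem ncnt_ge (t d : ZMod (ℓ^2)) :
    (ℓ^2 - 2*ℓ) * (ℓ^2 - ℓ) ≤ ncnt ℓ t d := by
  rw [ncnt_eq_sum]
  rw [← Finset.sum_filter_add_sum_filter_not Finset.univ
    (fun a : ZMod (ℓ^2) => IsUnit (a * (t - a) - d))]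
  have hcard : ℓ^2 - 2*ℓ
      ≤ (Finset.univ.filter (fun a : ZMod (ℓ^2) => IsUnit (a * (t - a) - d))).card := by
    have h1 := Finset.card_filter_add_card_filter_not (s := (Finset.univ : Finset (ZMod (ℓ^2))))
      (p := fun a : ZMod (ℓ^2) => IsUnit (a * (t - a) - d))
    rw [Finset.card_univ, zz_card] at h1
    have h2 := zz_bad_card_le (ℓ := ℓ) t d
    omega
  have h1 : ∑ a ∈ Finset.univ.filter (fun a : ZMod (ℓ^2) => IsUnit (a * (t - a) - d)),
      fcnt ℓ (a * (t - a) - d)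
      = (Finset.univ.filter (fun a : ZMod (ℓ^2) => IsUnit (a * (t - a) - d))).card
        * (ℓ^2 - ℓ) := by
    rw [Finset.sum_congr rfl (fun a ha => fcnt_unit (Finset.mem_filter.mp ha).2),
      Finset.sum_const, smul_eq_mul]
  have := Nat.mul_le_mul_right (ℓ^2 - ℓ) hcard
  omega

theorem mcnt_eq (t d : ZMod (ℓ^2)) :
    (Finset.univ.filter (fun A : Matrix (Fin 2) (Fin 2) (ZMod (ℓ^2)) =>
      A.trace = t ∧ A.det = d)).card = ncnt ℓ t d := by
  rw [ncnt]
  apply Finset.card_bij' (i := fun A _ => (A 0 0, A 0 1, A 1 0))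
    (j := fun x _ => Matrix.of ![![x.1, x.2.1], ![x.2.2, t - x.1]])
  · intro A hA
    rw [Finset.mem_filter] at hA
    obtain ⟨-, htr, hdet⟩ := hA
    rw [Matrix.trace_fin_two] at htr
    rw [Matrix.det_fin_two] at hdet
    simp only [Finset.mem_filter, Finset.mem_univ, true_and]
    have h11 : A 1 1 = t - A 0 0 := by linear_combination htr
    rw [← hdet, h11]
  · intro x hx
    rw [Finset.mem_filter] at hx
    simp only [Finset.mem_filter, Finset.mem_univ, true_and]
    constructor
    · rw [Matrix.trace_fin_two]
      simp [Matrix.of_apply]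
    · rw [Matrix.det_fin_two]
      simp [Matrix.of_apply]
      linear_combination hx.2
  · intro A hA
    rw [Finset.mem_filter] at hA
    have htr := hA.2.1
    rw [Matrix.trace_fin_two] at htr
    ext i j
    fin_cases i <;> fin_cases j <;> simp [Matrix.of_apply]
    linear_combination -htr
  · intro x hx
    simp [Matrix.of_apply]

noncomputable def scnt (ℓ : ℕ) [Fact ℓ.Prime] (d : ZMod (ℓ^2)) : ℕ :=
  (Finset.univ.filter (fun A : Matrix (Fin 2) (Fin 2) (ZMod (ℓ^2)) => A.det = d)).card

theorem scnt_eq_sum (d : ZMod (ℓ^2)) :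
    scnt ℓ d = ∑ t : ZMod (ℓ^2), ncnt ℓ t d := by
  rw [scnt, Finset.card_eq_sum_card_fiberwise (f := fun A => A.trace) (t := Finset.univ)
    (fun x _ => Finset.mem_univ _)]
  apply Finset.sum_congr rfl
  intro t _
  rw [← mcnt_eq, Finset.filter_filter]
  exact congrArg Finset.card (Finset.filter_congr (fun A _ => by tauto))

def mB (ℓ : ℕ) : ℕ := (ℓ^2 - 2*ℓ) * (ℓ^2 - ℓ)
def MB (ℓ : ℕ) : ℕ := ℓ^2 * (ℓ^2 - ℓ) + 2 * ℓ * (3 * ℓ^2)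

noncomputable def DsetF (ℓ : ℕ) [Fact ℓ.Prime] (k₁ k₂ : ℕ) :
    Finset (ZMod (ℓ^2) × ZMod (ℓ^2)) :=
  Finset.univ.image (fun v : (ZMod (ℓ^2))ˣ =>
    (((v : ZMod (ℓ^2))) ^ (k₁-1), ((v : ZMod (ℓ^2))) ^ (k₂-1)))

noncomputable def Acnt (ℓ : ℕ) [Fact ℓ.Prime] (k₁ k₂ : ℕ) : ℕ :=
  (Finset.univ.filter (fun q : Matrix (Fin 2) (Fin 2) (ZMod (ℓ^2)) ×
      Matrix (Fin 2) (Fin 2) (ZMod (ℓ^2)) =>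
    ∃ v : (ZMod (ℓ^2))ˣ, q.1.det = ((v : ZMod (ℓ^2))) ^ (k₁-1)
      ∧ q.2.det = ((v : ZMod (ℓ^2))) ^ (k₂-1))).card

noncomputable def Ccnt (ℓ : ℕ) [Fact ℓ.Prime] (k₁ k₂ : ℕ) : ℕ :=
  (Finset.univ.filter (fun q : Matrix (Fin 2) (Fin 2) (ZMod (ℓ^2)) ×
      Matrix (Fin 2) (Fin 2) (ZMod (ℓ^2)) =>
    (∃ v : (ZMod (ℓ^2))ˣ, q.1.det = ((v : ZMod (ℓ^2))) ^ (k₁-1)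
      ∧ q.2.det = ((v : ZMod (ℓ^2))) ^ (k₂-1)) ∧ q.1.trace = q.2.trace)).card

theorem Acnt_eq (k₁ k₂ : ℕ) :
    Acnt ℓ k₁ k₂ = ∑ dd ∈ DsetF ℓ k₁ k₂, scnt ℓ dd.1 * scnt ℓ dd.2 := by
  rw [Acnt, Finset.card_eq_sum_card_fiberwise
    (f := fun q => (q.1.det, q.2.det)) (t := DsetF ℓ k₁ k₂) ?memh]
  case memh =>
    intro q hq
    rw [Finset.mem_coe, Finset.mem_filter] at hq
    obtain ⟨-, v, h1, h2⟩ := hq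
    rw [Finset.mem_coe, DsetF, Finset.mem_image]
    exact ⟨v, Finset.mem_univ _, by rw [Prod.ext_iff]; exact ⟨h1.symm, h2.symm⟩⟩
  apply Finset.sum_congr rfl
  intro dd hdd
  rw [DsetF, Finset.mem_image] at hdd
  obtain ⟨v, -, hv⟩ := hdd
  rw [Finset.filter_filter]
  have h1 : Finset.filter (fun q : Matrix (Fin 2) (Fin 2) (ZMod (ℓ^2)) ×
        Matrix (Fin 2) (Fin 2) (ZMod (ℓ^2)) =>
        (∃ v : (ZMod (ℓ^2))ˣ, q.1.det = ((v : ZMod (ℓ^2))) ^ (k₁-1)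
          ∧ q.2.det = ((v : ZMod (ℓ^2))) ^ (k₂-1)) ∧ (q.1.det, q.2.det) = dd) Finset.univ
      = Finset.univ.filter (fun q : Matrix (Fin 2) (Fin 2) (ZMod (ℓ^2)) ×
          Matrix (Fin 2) (Fin 2) (ZMod (ℓ^2)) => q.1.det = dd.1 ∧ q.2.det = dd.2) := by
    apply Finset.filter_congr
    intro q _
    constructor
    · rintro ⟨-, h⟩
      rw [Prod.ext_iff] at h
      exact h
    · rintro ⟨h1, h2⟩
      refine ⟨⟨v, ?_, ?_⟩, ?_⟩
      · rw [h1, ← hv]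
      · rw [h2, ← hv]
      · rw [Prod.ext_iff]; exact ⟨h1, h2⟩
  rw [h1, ← Finset.univ_product_univ,
    Finset.filter_product (p := fun A : Matrix (Fin 2) (Fin 2) (ZMod (ℓ^2)) => A.det = dd.1)
      (q := fun A : Matrix (Fin 2) (Fin 2) (ZMod (ℓ^2)) => A.det = dd.2),
    Finset.card_product, scnt, scnt]

theorem Ccnt_eq (k₁ k₂ : ℕ) :
    Ccnt ℓ k₁ k₂ = ∑ dd ∈ DsetF ℓ k₁ k₂, ∑ t : ZMod (ℓ^2),
      ncnt ℓ t dd.1 * ncnt ℓ t dd.2 := by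
  rw [Ccnt, Finset.card_eq_sum_card_fiberwise
    (f := fun q => (q.1.det, q.2.det)) (t := DsetF ℓ k₁ k₂) ?memh]
  case memh =>
    intro q hq
    rw [Finset.mem_coe, Finset.mem_filter] at hq
    obtain ⟨-, ⟨v, h1, h2⟩, -⟩ := hq
    rw [Finset.mem_coe, DsetF, Finset.mem_image]
    exact ⟨v, Finset.mem_univ _, by rw [Prod.ext_iff]; exact ⟨h1.symm, h2.symm⟩⟩
  apply Finset.sum_congr rfl
  intro dd hdd
  rw [DsetF, Finset.mem_image] at hdd
  obtain ⟨v, -, hv⟩ := hdd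
  rw [Finset.filter_filter]
  have h1 : Finset.filter (fun q : Matrix (Fin 2) (Fin 2) (ZMod (ℓ^2)) ×
        Matrix (Fin 2) (Fin 2) (ZMod (ℓ^2)) =>
        ((∃ v : (ZMod (ℓ^2))ˣ, q.1.det = ((v : ZMod (ℓ^2))) ^ (k₁-1)
          ∧ q.2.det = ((v : ZMod (ℓ^2))) ^ (k₂-1)) ∧ q.1.trace = q.2.trace)
          ∧ (q.1.det, q.2.det) = dd) Finset.univ
      = Finset.univ.filter (fun q : Matrix (Fin 2) (Fin 2) (ZMod (ℓ^2)) ×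
          Matrix (Fin 2) (Fin 2) (ZMod (ℓ^2)) =>
          q.1.trace = q.2.trace ∧ q.1.det = dd.1 ∧ q.2.det = dd.2) := by
    apply Finset.filter_congr
    intro q _
    constructor
    · rintro ⟨⟨-, htr⟩, h⟩
      rw [Prod.ext_iff] at h
      exact ⟨htr, h⟩
    · rintro ⟨htr, h1, h2⟩
      refine ⟨⟨⟨v, by rw [h1, ← hv], by rw [h2, ← hv]⟩, htr⟩, ?_⟩
      rw [Prod.ext_iff]; exact ⟨h1, h2⟩
  rw [h1]
  rw [Finset.card_eq_sum_card_fiberwise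
    (f := fun q => q.1.trace) (t := Finset.univ) (fun x _ => Finset.mem_univ _)]
  apply Finset.sum_congr rfl
  intro t _
  rw [Finset.filter_filter]
  have h2 : Finset.filter (fun q : Matrix (Fin 2) (Fin 2) (ZMod (ℓ^2)) ×
        Matrix (Fin 2) (Fin 2) (ZMod (ℓ^2)) =>
        (q.1.trace = q.2.trace ∧ q.1.det = dd.1 ∧ q.2.det = dd.2) ∧ q.1.trace = t)
        Finset.univ
      = Finset.univ.filter (fun q : Matrix (Fin 2) (Fin 2) (ZMod (ℓ^2)) ×
          Matrix (Fin 2) (Fin 2) (ZMod (ℓ^2)) =>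
          (q.1.trace = t ∧ q.1.det = dd.1) ∧ (q.2.trace = t ∧ q.2.det = dd.2)) := by
    apply Finset.filter_congr
    intro q _
    constructor
    · rintro ⟨⟨he, h1, h2⟩, ht⟩
      exact ⟨⟨ht, h1⟩, ⟨by rw [← he, ht], h2⟩⟩
    · rintro ⟨⟨ht1, h1⟩, ⟨ht2, h2⟩⟩
      exact ⟨⟨by rw [ht1, ht2], h1, h2⟩, ht1⟩
  rw [h2, ← Finset.univ_product_univ,
    Finset.filter_product
      (p := fun A : Matrix (Fin 2) (Fin 2) (ZMod (ℓ^2)) => A.trace = t ∧ A.det = dd.1)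
      (q := fun A : Matrix (Fin 2) (Fin 2) (ZMod (ℓ^2)) => A.trace = t ∧ A.det = dd.2),
    Finset.card_product, mcnt_eq, mcnt_eq]

theorem scnt_ge' (d : ZMod (ℓ^2)) : ℓ^2 * mB ℓ ≤ scnt ℓ d := by
  rw [scnt_eq_sum]
  calc ℓ^2 * mB ℓ = ∑ _t : ZMod (ℓ^2), mB ℓ := by
        rw [Finset.sum_const, Finset.card_univ, zz_card, smul_eq_mul]
    _ ≤ _ := Finset.sum_le_sum (fun t _ => ncnt_ge t d)

theorem scnt_le' (d : ZMod (ℓ^2)) : scnt ℓ d ≤ ℓ^2 * MB ℓ := by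
  rw [scnt_eq_sum]
  calc ∑ t : ZMod (ℓ^2), ncnt ℓ t d ≤ ∑ _t : ZMod (ℓ^2), MB ℓ :=
        Finset.sum_le_sum (fun t _ => ncnt_le t d)
    _ = ℓ^2 * MB ℓ := by rw [Finset.sum_const, Finset.card_univ, zz_card, smul_eq_mul]

theorem Ccnt_le (k₁ k₂ : ℕ) :
    ℓ^2 * mB ℓ * Ccnt ℓ k₁ k₂ ≤ MB ℓ * Acnt ℓ k₁ k₂ := by
  rw [Ccnt_eq, Acnt_eq, Finset.mul_sum, Finset.mul_sum]
  apply Finset.sum_le_sum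
  intro dd _
  have hinner : ∑ t : ZMod (ℓ^2), ncnt ℓ t dd.1 * ncnt ℓ t dd.2
      ≤ MB ℓ * scnt ℓ dd.2 := by
    rw [scnt_eq_sum, Finset.mul_sum]
    exact Finset.sum_le_sum (fun t _ => Nat.mul_le_mul_right _ (ncnt_le t dd.1))
  calc ℓ^2 * mB ℓ * (∑ t : ZMod (ℓ^2), ncnt ℓ t dd.1 * ncnt ℓ t dd.2)
      ≤ ℓ^2 * mB ℓ * (MB ℓ * scnt ℓ dd.2) := Nat.mul_le_mul_left _ hinner
    _ = MB ℓ * (ℓ^2 * mB ℓ * scnt ℓ dd.2) := by ring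
    _ ≤ MB ℓ * (scnt ℓ dd.1 * scnt ℓ dd.2) :=
        Nat.mul_le_mul_left _ (Nat.mul_le_mul_right _ (scnt_ge' dd.1))

theorem Ccnt_ge (k₁ k₂ : ℕ) :
    mB ℓ * Acnt ℓ k₁ k₂ ≤ ℓ^2 * MB ℓ * Ccnt ℓ k₁ k₂ := by
  rw [Ccnt_eq, Acnt_eq, Finset.mul_sum, Finset.mul_sum]
  apply Finset.sum_le_sum
  intro dd _
  have hinner : mB ℓ * scnt ℓ dd.2
      ≤ ∑ t : ZMod (ℓ^2), ncnt ℓ t dd.1 * ncnt ℓ t dd.2 := by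
    rw [scnt_eq_sum, Finset.mul_sum]
    exact Finset.sum_le_sum (fun t _ => Nat.mul_le_mul_right _ (ncnt_ge t dd.1))
  calc mB ℓ * (scnt ℓ dd.1 * scnt ℓ dd.2)
      ≤ mB ℓ * ((ℓ^2 * MB ℓ) * scnt ℓ dd.2) :=
        Nat.mul_le_mul_left _ (Nat.mul_le_mul_right _ (scnt_le' dd.1))
    _ = ℓ^2 * MB ℓ * (mB ℓ * scnt ℓ dd.2) := by ring
    _ ≤ _ := Nat.mul_le_mul_left _ hinner

theorem Acnt_pos (h3 : 3 ≤ ℓ) (k₁ k₂ : ℕ) : 0 < Acnt ℓ k₁ k₂ := by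
  rw [Acnt_eq]
  have hmem : ((1 : ZMod (ℓ^2)), (1 : ZMod (ℓ^2))) ∈ DsetF ℓ k₁ k₂ := by
    rw [DsetF, Finset.mem_image]
    exact ⟨1, Finset.mem_univ _, by simp⟩
  have hpos : 0 < scnt ℓ (1 : ZMod (ℓ^2)) := by
    have := scnt_ge' (ℓ := ℓ) (1 : ZMod (ℓ^2))
    have hm : 0 < mB ℓ := by
      rw [mB]
      have h1 : 2*ℓ < ℓ^2 := by nlinarith
      have h2 : ℓ < ℓ^2 := by nlinarith
      exact Nat.mul_pos (by omega) (by omega)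
    have hl2 : 0 < ℓ^2 := by positivity
    calc 0 < ℓ^2 * mB ℓ := Nat.mul_pos hl2 hm
      _ ≤ _ := scnt_ge' _
  calc 0 < scnt ℓ (1:ZMod (ℓ^2)) * scnt ℓ (1:ZMod (ℓ^2)) := Nat.mul_pos hpos hpos
    _ ≤ _ := Finset.single_le_sum (f := fun dd => scnt ℓ dd.1 * scnt ℓ dd.2)
        (fun i _ => Nat.zero_le _) hmem

theorem card_filter_irrel {α : Type*} [Fintype α] (p : α → Prop) (h1 h2 : DecidablePred p) :
    (@Finset.filter α p h1 Finset.univ).card = (@Finset.filter α p h2 Finset.univ).card := by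
  rw [Subsingleton.elim h1 h2]

theorem card_subtype_eq
    (P : Matrix (Fin 2) (Fin 2) (ZMod (ℓ^2)) × Matrix (Fin 2) (Fin 2) (ZMod (ℓ^2)) → Prop)
    (hP : ∀ q, P q → IsUnit q.1.det ∧ IsUnit q.2.det) :
    Nat.card {p : Matrix.GeneralLinearGroup (Fin 2) (ZMod (ℓ^2)) ×
        Matrix.GeneralLinearGroup (Fin 2) (ZMod (ℓ^2)) //
      P ((p.1 : Matrix (Fin 2) (Fin 2) (ZMod (ℓ^2))),
         (p.2 : Matrix (Fin 2) (Fin 2) (ZMod (ℓ^2))))}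
    = (Finset.univ.filter P).card := by
  classical
  have e : {p : Matrix.GeneralLinearGroup (Fin 2) (ZMod (ℓ^2)) ×
        Matrix.GeneralLinearGroup (Fin 2) (ZMod (ℓ^2)) //
      P ((p.1 : Matrix (Fin 2) (Fin 2) (ZMod (ℓ^2))),
         (p.2 : Matrix (Fin 2) (Fin 2) (ZMod (ℓ^2))))}
      ≃ {q : Matrix (Fin 2) (Fin 2) (ZMod (ℓ^2)) ×
          Matrix (Fin 2) (Fin 2) (ZMod (ℓ^2)) // P q} := by
    refine Equiv.ofBijective
      (fun p => ⟨((p.1.1 : Matrix (Fin 2) (Fin 2) (ZMod (ℓ^2))),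
        (p.1.2 : Matrix (Fin 2) (Fin 2) (ZMod (ℓ^2)))), p.2⟩) ⟨?_, ?_⟩
    · intro p q h
      apply Subtype.ext
      have h' := congrArg Subtype.val h
      rw [Prod.ext_iff] at h'
      exact Prod.ext (Units.ext h'.1) (Units.ext h'.2)
    · rintro ⟨⟨q₁, q₂⟩, hq⟩
      have h1 := (Matrix.isUnit_iff_isUnit_det q₁).mpr (hP _ hq).1
      have h2 := (Matrix.isUnit_iff_isUnit_det q₂).mpr (hP _ hq).2
      refine ⟨⟨(h1.unit, h2.unit), ?_⟩, ?_⟩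
      · simpa only [h1.unit_spec, h2.unit_spec] using hq
      · apply Subtype.ext
        simp only [h1.unit_spec, h2.unit_spec]
  rw [Nat.card_congr e, Nat.card_eq_fintype_card]
  convert Fintype.card_subtype (p := fun q : Matrix (Fin 2) (Fin 2) (ZMod (ℓ^2)) ×
    Matrix (Fin 2) (Fin 2) (ZMod (ℓ^2)) => P q)

theorem rat_final {A C : ℕ} (h5 : 5 ≤ ℓ) {ε : ℚ} (hε : 0 < ε)
    (hQ32 : 32 < ε * ℓ)
    (hup : ℓ^2 * mB ℓ * C ≤ MB ℓ * A) (hlo : mB ℓ * A ≤ ℓ^2 * MB ℓ * C)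
    (hA : 0 < A) :
    |(ℓ:ℚ)^2 * ((C:ℚ)/(A:ℚ)) - 1| < ε := by
  have hQ5 : (5:ℚ) ≤ (ℓ:ℚ) := by exact_mod_cast h5
  have hQpos : 0 < (ℓ:ℚ) := by linarith
  have h2l : 2*ℓ ≤ ℓ^2 := by nlinarith
  have h1l : ℓ ≤ ℓ^2 := by nlinarith
  have hm : (mB ℓ : ℚ) = ((ℓ:ℚ)^2 - 2*(ℓ:ℚ)) * ((ℓ:ℚ)^2 - (ℓ:ℚ)) := by
    rw [mB]
    push_cast [Nat.cast_sub h2l, Nat.cast_sub h1l]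
    ring
  have hM : (MB ℓ : ℚ) = (ℓ:ℚ)^2 * ((ℓ:ℚ)^2 - (ℓ:ℚ)) + 6*(ℓ:ℚ)^3 := by
    rw [MB]
    push_cast [Nat.cast_sub h1l]
    ring
  have hmpos : 0 < (mB ℓ : ℚ) := by rw [hm]; nlinarith
  have hMpos : 0 < (MB ℓ : ℚ) := by rw [hM]; nlinarith
  have hmM : (mB ℓ : ℚ) ≤ (MB ℓ : ℚ) := by rw [hm, hM]; nlinarith
  have hApos : 0 < (A:ℚ) := by exact_mod_cast hA
  have c1 : (ℓ:ℚ)^2 * (mB ℓ : ℚ) * (C:ℚ) ≤ (MB ℓ : ℚ) * (A:ℚ) := by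
    exact_mod_cast hup
  have c2 : (mB ℓ : ℚ) * (A:ℚ) ≤ (ℓ:ℚ)^2 * (MB ℓ : ℚ) * (C:ℚ) := by
    exact_mod_cast hlo
  have key : (MB ℓ : ℚ) - (mB ℓ : ℚ) < ε * (mB ℓ : ℚ) := by
    rw [hm, hM]
    nlinarith [mul_nonneg (le_of_lt (sub_pos.mpr hQ32))
        (by nlinarith : (0:ℚ) ≤ (ℓ:ℚ)^3 - 3*(ℓ:ℚ)^2),
      mul_nonneg (by linarith : (0:ℚ) ≤ (ℓ:ℚ) - 5) (sq_nonneg (ℓ:ℚ)),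
      sq_nonneg (ℓ:ℚ), sq_nonneg ((ℓ:ℚ)-3)]
  have hx1 : (ℓ:ℚ)^2 * ((C:ℚ)/(A:ℚ)) ≤ (MB ℓ : ℚ) / (mB ℓ : ℚ) := by
    rw [mul_div_assoc', div_le_div_iff₀ hApos hmpos]
    calc (ℓ:ℚ)^2 * (C:ℚ) * (mB ℓ:ℚ) = (ℓ:ℚ)^2 * (mB ℓ:ℚ) * (C:ℚ) := by ring
      _ ≤ (MB ℓ:ℚ) * (A:ℚ) := c1
  have hx2 : (mB ℓ : ℚ) / (MB ℓ : ℚ) ≤ (ℓ:ℚ)^2 * ((C:ℚ)/(A:ℚ)) := by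
    rw [mul_div_assoc', div_le_div_iff₀ hMpos hApos]
    calc (mB ℓ:ℚ) * (A:ℚ) ≤ (ℓ:ℚ)^2 * (MB ℓ:ℚ) * (C:ℚ) := c2
      _ = (ℓ:ℚ)^2 * (C:ℚ) * (MB ℓ:ℚ) := by ring
  rw [abs_sub_lt_iff]
  constructor
  · have h : (MB ℓ : ℚ) / (mB ℓ : ℚ) - 1 < ε := by
      rw [div_sub_one (ne_of_gt hmpos), div_lt_iff₀ hmpos]
      linarith
    linarith
  · have heq : 1 - (mB ℓ : ℚ) / (MB ℓ : ℚ) = ((MB ℓ:ℚ) - (mB ℓ:ℚ)) / (MB ℓ:ℚ) := by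
      rw [eq_div_iff (ne_of_gt hMpos), sub_mul, one_mul, div_mul_cancel₀ _ (ne_of_gt hMpos)]
    have hemm : ε * (mB ℓ:ℚ) ≤ ε * (MB ℓ:ℚ) := mul_le_mul_of_nonneg_left hmM hε.le
    have h : 1 - (mB ℓ : ℚ) / (MB ℓ : ℚ) < ε := by
      rw [heq, div_lt_iff₀ hMpos]
      linarith
    linarith

end aux

set_option maxHeartbeats 2000000 in
/-- Fix k₁, k₂ ≥ 2 and set δ(ℓ²) = |𝒞_{ℓ²}|/|𝒜_{ℓ²}| ∈ ℚ. Then δ(ℓ²) ~ 1/ℓ² as ℓ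
ranges over primes: for every ε > 0 there is L such that for every prime ℓ > L,
|ℓ²·δ(ℓ²) − 1| < ε. -/
theorem stmt_17 (k₁ k₂ : ℕ) (hk₁ : 2 ≤ k₁) (hk₂ : 2 ≤ k₂) :
    ∀ ε : ℚ, 0 < ε → ∃ L : ℕ, ∀ ℓ : ℕ, ℓ.Prime → L < ℓ →
      |(ℓ : ℚ) ^ 2 *
        ((Nat.card {p : Matrix.GeneralLinearGroup (Fin 2) (ZMod (ℓ ^ 2)) ×
              Matrix.GeneralLinearGroup (Fin 2) (ZMod (ℓ ^ 2)) //
            (∃ v : (ZMod (ℓ ^ 2))ˣ,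
              (p.1 : Matrix (Fin 2) (Fin 2) (ZMod (ℓ ^ 2))).det =
                (v : ZMod (ℓ ^ 2)) ^ (k₁ - 1) ∧
              (p.2 : Matrix (Fin 2) (Fin 2) (ZMod (ℓ ^ 2))).det =
                (v : ZMod (ℓ ^ 2)) ^ (k₂ - 1)) ∧
            Matrix.trace (p.1 : Matrix (Fin 2) (Fin 2) (ZMod (ℓ ^ 2))) =
              Matrix.trace (p.2 : Matrix (Fin 2) (Fin 2) (ZMod (ℓ ^ 2)))} : ℚ) /
          (Nat.card {p : Matrix.GeneralLinearGroup (Fin 2) (ZMod (ℓ ^ 2)) ×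
              Matrix.GeneralLinearGroup (Fin 2) (ZMod (ℓ ^ 2)) //
            ∃ v : (ZMod (ℓ ^ 2))ˣ,
              (p.1 : Matrix (Fin 2) (Fin 2) (ZMod (ℓ ^ 2))).det =
                (v : ZMod (ℓ ^ 2)) ^ (k₁ - 1) ∧
              (p.2 : Matrix (Fin 2) (Fin 2) (ZMod (ℓ ^ 2))).det =
                (v : ZMod (ℓ ^ 2)) ^ (k₂ - 1)} : ℚ)) -
        1| < ε := by
  intro ε hε
  refine ⟨max 4 ⌈(32:ℚ)/ε⌉₊, fun ℓ hp hL => ?_⟩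
  haveI : Fact ℓ.Prime := ⟨hp⟩
  have h5 : 5 ≤ ℓ := by
    have := le_max_left 4 ⌈(32:ℚ)/ε⌉₊
    omega
  have hQ32 : 32 < ε * ℓ := by
    have h1 : (⌈(32:ℚ)/ε⌉₊ : ℚ) < (ℓ : ℚ) := by
      have : ⌈(32:ℚ)/ε⌉₊ < ℓ := by
        have := le_max_right 4 ⌈(32:ℚ)/ε⌉₊
        omega
      exact_mod_cast this
    have h2 : (32:ℚ)/ε < (ℓ:ℚ) := lt_of_le_of_lt (Nat.le_ceil _) h1
    have := (div_lt_iff₀ hε).mp h2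
    linarith
  have hCeq : Nat.card {p : Matrix.GeneralLinearGroup (Fin 2) (ZMod (ℓ ^ 2)) ×
              Matrix.GeneralLinearGroup (Fin 2) (ZMod (ℓ ^ 2)) //
            (∃ v : (ZMod (ℓ ^ 2))ˣ,
              (p.1 : Matrix (Fin 2) (Fin 2) (ZMod (ℓ ^ 2))).det =
                (v : ZMod (ℓ ^ 2)) ^ (k₁ - 1) ∧
              (p.2 : Matrix (Fin 2) (Fin 2) (ZMod (ℓ ^ 2))).det =
                (v : ZMod (ℓ ^ 2)) ^ (k₂ - 1)) ∧
            Matrix.trace (p.1 : Matrix (Fin 2) (Fin 2) (ZMod (ℓ ^ 2))) =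
              Matrix.trace (p.2 : Matrix (Fin 2) (Fin 2) (ZMod (ℓ ^ 2)))}
      = Ccnt ℓ k₁ k₂ := by
    rw [Ccnt]
    have h := card_subtype_eq (ℓ := ℓ) (fun q => (∃ v : (ZMod (ℓ^2))ˣ,
      q.1.det = ((v : ZMod (ℓ^2))) ^ (k₁-1) ∧ q.2.det = ((v : ZMod (ℓ^2))) ^ (k₂-1))
        ∧ q.1.trace = q.2.trace) (by
      rintro q ⟨⟨v, h1, h2⟩, -⟩
      constructor
      · rw [h1, ← Units.val_pow_eq_pow_val]
        exact Units.isUnit _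
      · rw [h2, ← Units.val_pow_eq_pow_val]
        exact Units.isUnit _)
    exact h.trans (card_filter_irrel _ _ _)
  have hAeq : Nat.card {p : Matrix.GeneralLinearGroup (Fin 2) (ZMod (ℓ ^ 2)) ×
              Matrix.GeneralLinearGroup (Fin 2) (ZMod (ℓ ^ 2)) //
            ∃ v : (ZMod (ℓ ^ 2))ˣ,
              (p.1 : Matrix (Fin 2) (Fin 2) (ZMod (ℓ ^ 2))).det =
                (v : ZMod (ℓ ^ 2)) ^ (k₁ - 1) ∧
              (p.2 : Matrix (Fin 2) (Fin 2) (ZMod (ℓ ^ 2))).det =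
                (v : ZMod (ℓ ^ 2)) ^ (k₂ - 1)}
      = Acnt ℓ k₁ k₂ := by
    rw [Acnt]
    have h := card_subtype_eq (ℓ := ℓ) (fun q => ∃ v : (ZMod (ℓ^2))ˣ,
      q.1.det = ((v : ZMod (ℓ^2))) ^ (k₁-1) ∧ q.2.det = ((v : ZMod (ℓ^2))) ^ (k₂-1)) (by
      rintro q ⟨v, h1, h2⟩
      constructor
      · rw [h1, ← Units.val_pow_eq_pow_val]
        exact Units.isUnit _
      · rw [h2, ← Units.val_pow_eq_pow_val]
        exact Units.isUnit _)
    exact h.trans (card_filter_irrel _ _ _)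
  rw [hCeq, hAeq]
  exact rat_final h5 hε hQ32 (Ccnt_le k₁ k₂) (Ccnt_ge k₁ k₂) (Acnt_pos (by omega) k₁ k₂)
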